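/- The formal power series S(x) = ∑_{n≥1} (1/(2n+1)) C(3n, n) x^n over ℚ satisfies the functional equation S = x + 3x·S + 3x·S^2 + x·S^3, equivalently S = x·(1+S)^3. -/

import Mathlib

open PowerSeries

/-- Generating function of S-Motzkin paths: `S(x) = ∑_{n ≥ 1} C(3n,n)/(2n+1) xⁿ`. -/
noncomputable def S : PowerSeries ℚ :=
  PowerSeries.mk fun n => if n = 0 then 0 else (Nat.choose (3 * n) n : ℚ) / (2 * n + 1)

open Finset

noncomputable def acoef : ℕ → ℚ
  | 0 => 1
  | n + 1 => ∑ p ∈ (antidiagonal n).attach,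
      acoef p.1.1 * ∑ q ∈ (antidiagonal p.1.2).attach, acoef q.1.1 * acoef q.1.2
decreasing_by
  · have := Finset.HasAntidiagonal.mem_antidiagonal.mp p.2; omega
  · have h1 := Finset.HasAntidiagonal.mem_antidiagonal.mp p.2
    have h2 := Finset.HasAntidiagonal.mem_antidiagonal.mp q.2; omega
  · have h1 := Finset.HasAntidiagonal.mem_antidiagonal.mp p.2
    have h2 := Finset.HasAntidiagonal.mem_antidiagonal.mp q.2; omega

noncomputable def Yser : PowerSeries ℚ := PowerSeries.mk acoef

lemma hYser : Yser = 1 + X * Yser ^ 3 := by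
  ext n
  cases n with
  | zero => simp [Yser, acoef, coeff_zero_eq_constantCoeff]
  | succ n =>
    rw [map_add, coeff_succ_X_mul]
    have h3 : (Yser : PowerSeries ℚ) ^ 3 = Yser * (Yser * Yser) := by ring
    rw [h3, coeff_mul]
    simp only [coeff_mul, Yser, coeff_mk]
    rw [show (coeff (n+1)) (1 : PowerSeries ℚ) = 0 by simp, zero_add]
    rw [acoef]
    rw [Finset.sum_attach (antidiagonal n) (fun p => acoef p.1 * ∑ q ∈ (antidiagonal p.2).attach, acoef q.1.1 * acoef q.1.2)]
    exact Finset.sum_congr rfl fun p _ => by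
      rw [Finset.sum_attach (antidiagonal p.2) (fun q => acoef q.1 * acoef q.2)]

noncomputable def bq (n : ℕ) : ℚ := (Nat.choose (3 * n) n : ℚ) / (2 * n + 1)

lemma brec (n : ℕ) : ((n:ℚ)+1)*(2*(n:ℚ)+2)*(2*(n:ℚ)+3) * bq (n+1)
    = (3*(n:ℚ)+1)*(3*(n:ℚ)+2)*(3*(n:ℚ)+3) * bq n := by
  unfold bq
  rw [show 3*(n+1) = 3*n+3 by ring]
  rw [Nat.cast_choose ℚ (by omega : n+1 ≤ 3*n+3), show 3*n+3-(n+1) = 2*n+2 by omega]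
  rw [Nat.cast_choose ℚ (by omega : n ≤ 3*n), show 3*n-n = 2*n by omega]
  have hf3 : ((3*n+3).factorial : ℚ) = (3*(n:ℚ)+3)*(3*(n:ℚ)+2)*(3*(n:ℚ)+1)*((3*n).factorial : ℚ) := by
    rw [show 3*n+3 = (3*n+2)+1 by omega, Nat.factorial_succ,
        show 3*n+2 = (3*n+1)+1 by omega, Nat.factorial_succ,
        show 3*n+1 = (3*n)+1 by omega, Nat.factorial_succ]
    push_cast; ring
  have hf2 : ((2*n+2).factorial : ℚ) = (2*(n:ℚ)+2)*(2*(n:ℚ)+1)*((2*n).factorial : ℚ) := by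
    rw [show 2*n+2 = (2*n+1)+1 by omega, Nat.factorial_succ,
        show 2*n+1 = (2*n)+1 by omega, Nat.factorial_succ]
    push_cast; ring
  have hf1 : ((n+1).factorial : ℚ) = ((n:ℚ)+1)*((n).factorial : ℚ) := by
    rw [Nat.factorial_succ]; push_cast; ring
  rw [hf3, hf2, hf1]
  have h1 : (((n).factorial : ℚ)) ≠ 0 := Nat.cast_ne_zero.mpr (Nat.factorial_ne_zero n)
  have h2 : ((((2*n)).factorial : ℚ)) ≠ 0 := Nat.cast_ne_zero.mpr (Nat.factorial_ne_zero _)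
  have h3 : ((((3*n)).factorial : ℚ)) ≠ 0 := Nat.cast_ne_zero.mpr (Nat.factorial_ne_zero _)
  have h4 : (2*(n:ℚ)+1) ≠ 0 := by positivity
  have h5 : (2*(n:ℚ)+3) ≠ 0 := by positivity
  have h6 : ((n:ℚ)+1) ≠ 0 := by positivity
  push_cast
  field_simp
  ring

lemma arec (m : ℕ) : ((m:ℚ)+1)*(2*(m:ℚ)+2)*(2*(m:ℚ)+3) * acoef (m+1)
    = (3*(m:ℚ)+1)*(3*(m:ℚ)+2)*(3*(m:ℚ)+3) * acoef m := by
  have hY : Yser = 1 + X * Yser ^ 3 := hYser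
  set Y : PowerSeries ℚ := Yser with hYdef
  set Y1 := d⁄dX ℚ Y with hY1
  set Y2 := d⁄dX ℚ Y1 with hY2
  set Y3 := d⁄dX ℚ Y2 with hY3
  have h1 : Y1 = Y^3 + 3*X*Y^2*Y1 := by
    rw [hY1]
    conv_lhs => rw [hY]
    simp only [map_add, Derivation.leibniz, Derivation.leibniz_pow, derivative_X,
      Derivation.map_one_eq_zero, smul_eq_mul, nsmul_eq_mul]
    ring_nf
  have h1' : Y1 = Y^3 + (X*(Y^2*Y1) + X*(Y^2*Y1) + X*(Y^2*Y1)) := by linear_combination h1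
  have heq2 := congrArg (d⁄dX ℚ) h1'
  simp only [map_add, Derivation.leibniz, Derivation.leibniz_pow, derivative_X,
    Derivation.map_one_eq_zero, smul_eq_mul, nsmul_eq_mul] at heq2
  have h2 : Y2 = 6*Y^2*Y1 + 6*X*Y*Y1^2 + 3*X*Y^2*Y2 := by
    rw [hY2]; linear_combination heq2
  have h2' : Y2 = (Y^2*Y1 + Y^2*Y1 + Y^2*Y1 + Y^2*Y1 + Y^2*Y1 + Y^2*Y1)
      + (X*(Y*Y1^2) + X*(Y*Y1^2) + X*(Y*Y1^2) + X*(Y*Y1^2) + X*(Y*Y1^2) + X*(Y*Y1^2))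
      + (X*(Y^2*Y2) + X*(Y^2*Y2) + X*(Y^2*Y2)) := by linear_combination h2
  have heq3 := congrArg (d⁄dX ℚ) h2'
  simp only [map_add, Derivation.leibniz, Derivation.leibniz_pow, derivative_X,
    Derivation.map_one_eq_zero, smul_eq_mul, nsmul_eq_mul] at heq3
  have h3 : Y3 = 18*Y*Y1^2 + 9*Y^2*Y2 + 6*X*Y1^3 + 18*X*Y*Y1*Y2 + 3*X*Y^2*Y3 := by
    rw [hY3]; linear_combination heq3
  have hu5 : (1 - 3*X*Y^2)^5 * (6*Y1 - 114*X*Y1 + 14*X*Y2 - 135*X^2*Y2 + 4*X^2*Y3 - 27*X^3*Y3 - 6*Y) = 0 := by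
    linear_combination
      ((6) + (-114)*X + (12)*X*Y^2 + (156)*X^2*Y*Y1 + (558)*X^2*Y^2 + (-60)*X^2*Y^4 + (24)*X^3*Y1^2 + (-1296)*X^3*Y*Y1 + (-732)*X^3*Y^3*Y1 + (-1620)*X^3*Y^4 + (60)*X^3*Y^6 + (-162)*X^4*Y1^2 + (216)*X^4*Y^2*Y1^2 + (7128)*X^4*Y^3*Y1 + (612)*X^4*Y^5*Y1 + (2430)*X^4*Y^6 + (-18)*X^4*Y^8 + (-1458)*X^5*Y^2*Y1^2 + (-1944)*X^5*Y^4*Y1^2 + (-10692)*X^5*Y^5*Y1 + (540)*X^5*Y^7*Y1 + (-1458)*X^5*Y^8 + (13122)*X^6*Y^4*Y1^2 + (3240)*X^6*Y^6*Y1^2 + (2916)*X^6*Y^7*Y1 + (-21870)*X^7*Y^6*Y1^2) * h1 +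
      ((14)*X + (-135)*X^2 + (-132)*X^2*Y^2 + (72)*X^3*Y*Y1 + (1377)*X^3*Y^2 + (432)*X^3*Y^4 + (-486)*X^4*Y*Y1 + (-648)*X^4*Y^3*Y1 + (-5103)*X^4*Y^4 + (-540)*X^4*Y^6 + (4374)*X^5*Y^3*Y1 + (1944)*X^5*Y^5*Y1 + (8019)*X^5*Y^6 + (162)*X^5*Y^8 + (-13122)*X^6*Y^5*Y1 + (-1944)*X^6*Y^7*Y1 + (-4374)*X^6*Y^8 + (13122)*X^7*Y^7*Y1) * h2 +
      ((4)*X^2 + (-27)*X^3 + (-48)*X^3*Y^2 + (324)*X^4*Y^2 + (216)*X^4*Y^4 + (-1458)*X^5*Y^4 + (-432)*X^5*Y^6 + (2916)*X^6*Y^6 + (324)*X^6*Y^8 + (-2187)*X^7*Y^8) * h3 +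
      ((6)*Y + (6)*Y^2 + (24)*X*Y^3 + (18)*X*Y^4 + (-18)*X^2*Y^5 + (-42)*X^2*Y^6 + (18)*X^3*Y^8) * hY
  have hunit : ((1 - 3*X*Y^2 : PowerSeries ℚ))^5 ≠ 0 := by
    intro h
    have h0 := congrArg (constantCoeff) h
    simp only [map_pow, map_sub, map_one, map_mul, constantCoeff_X, map_ofNat, zero_mul, mul_zero,
      map_zero] at h0
    norm_num at h0
  have hODE : C 6 * Y1 + C 14 * (X^1*Y2) + C 4 * (X^2*Y3)
      = C 6 * Y + C 114 * (X^1*Y1) + C 135 * (X^2*Y2) + C 27 * (X^3*Y3) := by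
    have hG := (mul_eq_zero.mp hu5).resolve_left hunit
    simp only [map_ofNat]
    linear_combination hG
  have hcY : ∀ k, coeff k Y = acoef k := fun k => by rw [hYdef, Yser, coeff_mk]
  have hc1 : ∀ k, coeff k Y1 = acoef (k+1) * ((k:ℚ)+1) := fun k => by
    rw [hY1, coeff_derivative, hcY]
    try push_cast
    try ring
  have hc2 : ∀ k, coeff k Y2 = acoef (k+2) * ((k:ℚ)+2) * ((k:ℚ)+1) := fun k => by
    rw [hY2, coeff_derivative, hc1]
    try push_cast
    try ring
  have hc3 : ∀ k, coeff k Y3 = acoef (k+3) * ((k:ℚ)+3) * ((k:ℚ)+2) * ((k:ℚ)+1) := fun k => by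
    rw [hY3, coeff_derivative, hc2]
    try push_cast
    try ring
  rcases m with _ | _ | _ | n
  · have h := congrArg (coeff 0) hODE
    simp only [map_add, coeff_C_mul, coeff_X_pow_mul', hcY, hc1, hc2, hc3] at h
    norm_num at h
    push_cast
    linear_combination 6 * h
  · have h := congrArg (coeff 1) hODE
    simp only [map_add, coeff_C_mul, coeff_X_pow_mul', hcY, hc1, hc2, hc3] at h
    norm_num at h
    push_cast
    linear_combination h
  · have h := congrArg (coeff 2) hODE
    simp only [map_add, coeff_C_mul, coeff_X_pow_mul', hcY, hc1, hc2, hc3] at h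
    norm_num at h
    push_cast
    linear_combination h
  · have h := congrArg (coeff (n+3)) hODE
    have e1 : ∀ f : PowerSeries ℚ, coeff (n+3) (X^1 * f) = coeff (n+2) f := fun f => by
      rw [show n+3 = (n+2)+1 by omega]; exact coeff_X_pow_mul f 1 (n+2)
    have e2 : ∀ f : PowerSeries ℚ, coeff (n+3) (X^2 * f) = coeff (n+1) f := fun f => by
      rw [show n+3 = (n+1)+2 by omega]; exact coeff_X_pow_mul f 2 (n+1)
    have e3 : ∀ f : PowerSeries ℚ, coeff (n+3) (X^3 * f) = coeff n f := fun f => by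
      exact coeff_X_pow_mul f 3 n
    simp only [map_add, coeff_C_mul, e1, e2, e3, hcY, hc1, hc2, hc3] at h
    push_cast at h ⊢
    rw [show n+3+1 = n+4 by omega, show n+2+2 = n+4 by omega, show n+1+3 = n+4 by omega,
        show n+2+1 = n+3 by omega, show n+1+2 = n+3 by omega] at h
    rw [show n+1+1+1+1 = n+4 by omega, show n+1+1+1 = n+3 by omega]
    push_cast
    linear_combination h

lemma aeqb : ∀ n, acoef n = bq n := by
  intro n
  induction n with
  | zero => simp [acoef, bq]
  | succ n ih =>
    have ha := arec n
    have hb := brec n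
    rw [ih] at ha
    rw [← hb] at ha
    have hne : ((n:ℚ)+1)*(2*(n:ℚ)+2)*(2*(n:ℚ)+3) ≠ 0 := by positivity
    exact mul_left_cancel₀ hne ha


lemma hS1 : (1 : PowerSeries ℚ) + S = Yser := by
  ext n
  cases n with
  | zero =>
    simp [S, Yser, acoef, coeff_zero_eq_constantCoeff]
  | succ n =>
    rw [map_add, Yser, coeff_mk, aeqb, S, coeff_mk]
    simp [bq]

theorem stmt_5 :
    S = X + 3 * X * S + 3 * X * S ^ 2 + X * S ^ 3 ∧ S = X * (1 + S) ^ 3 := by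
  have key : S = X * (1 + S) ^ 3 := by
    have h := hYser
    rw [← hS1] at h
    have : (1 : PowerSeries ℚ) + S = 1 + X * (1 + S)^3 := h
    linear_combination this
  exact ⟨by linear_combination key, key⟩
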